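/- Let λ, μ > 0, p ∈ (0,1], and let p̃ be a real number with λp̃² + (μ−λ)p̃ = μp, 0 < p̃ ≤ 1, and μ − λ + 2λp̃ > 0; set s̃ := 1/(μ − λ + 2λp̃). Suppose P > 0 and E are real numbers satisfying P = (μ/(λ+μ))·p + (λ/(λ+μ))·(1−p̃)·P and P·E = (μ/(λ+μ))·p·(1/(λ+μ)) + (λ/(λ+μ))·(1−p̃)·P·(1/(λ+μ) + s̃ + E). Then P = μp/(μ + λp̃) and E = 1/(μ − λ + 2λp̃). -/

import Mathlib

/-- Probability that a packet is informative and its conditional expected service time,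
in the LCFS preemptive-priority M/M/1 queue with delivery errors. -/
theorem lcfs_preemptive_informative (lam mu p pt P E : ℝ)
    (hlam : 0 < lam) (hmu : 0 < mu) (hp : p ∈ Set.Ioc (0 : ℝ) 1)
    (hquad : lam * pt ^ 2 + (mu - lam) * pt = mu * p)
    (hpt01 : 0 < pt ∧ pt ≤ 1)
    (hd : 0 < mu - lam + 2 * lam * pt)
    (st : ℝ) (hst : st = 1 / (mu - lam + 2 * lam * pt))
    (hP : 0 < P)
    (hPeq : P = mu / (lam + mu) * p + lam / (lam + mu) * (1 - pt) * P)
    (hPE : P * E = mu / (lam + mu) * p * (1 / (lam + mu))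
        + lam / (lam + mu) * (1 - pt) * P * (1 / (lam + mu) + st + E)) :
    P = mu * p / (mu + lam * pt) ∧ E = 1 / (mu - lam + 2 * lam * pt) := by
  obtain ⟨hpt0, hpt1⟩ := hpt01
  have hD : (0:ℝ) < lam + mu := by linarith
  have hden : (0:ℝ) < mu + lam * pt := by nlinarith
  subst hst
  have hP2 : P * (mu + lam * pt) = mu * p := by
    field_simp at hPeq
    nlinarith [hPeq]
  have hP1 : P = mu * p / (mu + lam * pt) := by
    rw [← hP2]; field_simp
  refine ⟨hP1, ?_⟩
  have hd' : mu - lam + lam * pt * 2 ≠ 0 := by nlinarith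
  have hd'' : mu - lam + lam * 2 * pt ≠ 0 := by nlinarith
  field_simp at hPE
  have hc : mu * p * (lam + mu) ^ 3 ≠ 0 := (mul_pos (mul_pos hmu hp.1) (pow_pos hD 3)).ne'
  have hE' : E * (mu - lam + 2 * lam * pt) * (mu * p * (lam + mu) ^ 3)
      = 1 * (mu * p * (lam + mu) ^ 3) := by
    linear_combination (lam + mu) ^ 2 * hPE - (E * (lam + mu) * (mu - lam + 2 * lam * pt)
      - 2 * lam * (1 - pt)) * (lam + mu) ^ 2 * hP2
  have hE : E * (mu - lam + 2 * lam * pt) = 1 := mul_right_cancel₀ hc hE'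
  field_simp
  linarith [hE]
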